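/- Assume ψ is C², A₀, A₁, A₂ are C¹, and equation (E1) holds at every point of ℝ × ℝ². Then at every point of ℝ × ℝ²: ∂_t(|ψ|² − ε^{1+2δ} Im(conj(ψ) D_t ψ)) + ∂₁(ε Im(conj(ψ) D₁ψ)) + ∂₂(ε Im(conj(ψ) D₂ψ)) = 0. That is, the mass conservation law ∂_t(ρ − ρ_R) + ∇·J = 0 holds with ρ := |ψ|², ρ_R := ε^{1+2δ} Im(conj(ψ) D_t ψ), and J := ε Im(conj(ψ) Dψ). -/

import Mathlib

noncomputable section

/-- Spacetime points `(t, x₁, x₂) ∈ ℝ × ℝ²`. -/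
abbrev Spt := ℝ × ℝ × ℝ

/-- Partial derivative in the time variable. -/
def ptd {E : Type*} [NormedAddCommGroup E] [NormedSpace ℝ E] (f : Spt → E) (p : Spt) : E :=
  fderiv ℝ f p (1, 0, 0)

/-- Partial derivative in the first spatial variable. -/
def px1 {E : Type*} [NormedAddCommGroup E] [NormedSpace ℝ E] (f : Spt → E) (p : Spt) : E :=
  fderiv ℝ f p (0, 1, 0)

/-- Partial derivative in the second spatial variable. -/
def px2 {E : Type*} [NormedAddCommGroup E] [NormedSpace ℝ E] (f : Spt → E) (p : Spt) : E :=
  fderiv ℝ f p (0, 0, 1)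

/-- Covariant time derivative `D_t ψ = ∂_t ψ − i ε⁻¹ A₀ ψ`. -/
def Dt (ε : ℝ) (A₀ : Spt → ℝ) (ψ : Spt → ℂ) (p : Spt) : ℂ :=
  ptd ψ p - Complex.I * ((ε⁻¹ : ℝ) : ℂ) * ((A₀ p : ℝ) : ℂ) * ψ p

/-- Covariant derivative `D₁ ψ = ∂₁ ψ − i ε^{δ−1} A₁ ψ`. -/
def D1 (ε δ : ℝ) (A₁ : Spt → ℝ) (ψ : Spt → ℂ) (p : Spt) : ℂ :=
  px1 ψ p - Complex.I * ((ε ^ (δ - 1) : ℝ) : ℂ) * ((A₁ p : ℝ) : ℂ) * ψ p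

/-- Covariant derivative `D₂ ψ = ∂₂ ψ − i ε^{δ−1} A₂ ψ`. -/
def D2 (ε δ : ℝ) (A₂ : Spt → ℝ) (ψ : Spt → ℂ) (p : Spt) : ℂ :=
  px2 ψ p - Complex.I * ((ε ^ (δ - 1) : ℝ) : ℂ) * ((A₂ p : ℝ) : ℂ) * ψ p

/- ### Auxiliary calculus lemmas -/

lemma csh_fim {f : Spt → ℂ} {p : Spt} (hf : DifferentiableAt ℝ f p) (v : Spt) :
    fderiv ℝ (fun q => (f q).im) p v = (fderiv ℝ f p v).im := by
  have := (Complex.imCLM.hasFDerivAt.comp p hf.hasFDerivAt).fderiv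
  rw [show (fun q => (f q).im) = (Complex.imCLM ∘ f) from rfl, this]; rfl

lemma csh_dim {f : Spt → ℂ} {p : Spt} (hf : DifferentiableAt ℝ f p) :
    DifferentiableAt ℝ (fun q => (f q).im) p :=
  (Complex.imCLM.differentiableAt.comp p hf : _)

lemma csh_fre {f : Spt → ℂ} {p : Spt} (hf : DifferentiableAt ℝ f p) (v : Spt) :
    fderiv ℝ (fun q => (f q).re) p v = (fderiv ℝ f p v).re := by
  have := (Complex.reCLM.hasFDerivAt.comp p hf.hasFDerivAt).fderiv
  rw [show (fun q => (f q).re) = (Complex.reCLM ∘ f) from rfl, this]; rfl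

lemma csh_dre {f : Spt → ℂ} {p : Spt} (hf : DifferentiableAt ℝ f p) :
    DifferentiableAt ℝ (fun q => (f q).re) p :=
  (Complex.reCLM.differentiableAt.comp p hf : _)

lemma csh_fconj {f : Spt → ℂ} {p : Spt} (hf : DifferentiableAt ℝ f p) (v : Spt) :
    fderiv ℝ (fun q => (starRingEnd ℂ) (f q)) p v = (starRingEnd ℂ) (fderiv ℝ f p v) := by
  have := ((Complex.conjCLE : ℂ ≃L[ℝ] ℂ).toContinuousLinearMap.hasFDerivAt.comp p
    hf.hasFDerivAt).fderiv
  rw [show (fun q => (starRingEnd ℂ) (f q))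
      = ((Complex.conjCLE : ℂ ≃L[ℝ] ℂ).toContinuousLinearMap ∘ f) from rfl, this]; rfl

lemma csh_dconj {f : Spt → ℂ} {p : Spt} (hf : DifferentiableAt ℝ f p) :
    DifferentiableAt ℝ (fun q => (starRingEnd ℂ) (f q)) p :=
  ((Complex.conjCLE : ℂ ≃L[ℝ] ℂ).toContinuousLinearMap.differentiableAt.comp p hf : _)

lemma csh_fofr {f : Spt → ℝ} {p : Spt} (hf : DifferentiableAt ℝ f p) (v : Spt) :
    fderiv ℝ (fun q => ((f q : ℝ) : ℂ)) p v = ((fderiv ℝ f p v : ℝ) : ℂ) := by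
  have := (Complex.ofRealCLM.hasFDerivAt.comp p hf.hasFDerivAt).fderiv
  rw [show (fun q => ((f q : ℝ):ℂ)) = (Complex.ofRealCLM ∘ f) from rfl, this]; rfl

lemma csh_dofr {f : Spt → ℝ} {p : Spt} (hf : DifferentiableAt ℝ f p) :
    DifferentiableAt ℝ (fun q => ((f q : ℝ) : ℂ)) p :=
  (Complex.ofRealCLM.differentiableAt.comp p hf : _)

lemma csh_fmul {f g : Spt → ℂ} {p : Spt} (hf : DifferentiableAt ℝ f p)
    (hg : DifferentiableAt ℝ g p) (v : Spt) :
    fderiv ℝ (fun q => f q * g q) p v = f p * fderiv ℝ g p v + fderiv ℝ f p v * g p := by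
  rw [fderiv_fun_mul hf hg]; simp [mul_comm]

lemma csh_fsub {f g : Spt → ℝ} {p : Spt} (hf : DifferentiableAt ℝ f p)
    (hg : DifferentiableAt ℝ g p) (v : Spt) :
    fderiv ℝ (fun q => f q - g q) p v = fderiv ℝ f p v - fderiv ℝ g p v := by
  rw [fderiv_fun_sub hf hg]; rfl

lemma csh_fcmul {f : Spt → ℝ} {p : Spt} (c : ℝ) (hf : DifferentiableAt ℝ f p) (v : Spt) :
    fderiv ℝ (fun q => c * f q) p v = c * fderiv ℝ f p v := by
  rw [fderiv_const_mul hf]; rfl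

lemma csh_dpsi' {ψ : Spt → ℂ} (hψ : ContDiff ℝ 2 ψ) (w : Spt) :
    Differentiable ℝ (fun q => fderiv ℝ ψ q w) := by
  have h1 : ContDiff ℝ 1 (fderiv ℝ ψ) := hψ.fderiv_right (by norm_num)
  exact fun q =>
    ((ContinuousLinearMap.apply ℝ ℂ w).differentiable.comp (h1.differentiable (by norm_num))) q

/-- Differentiability of a covariant derivative `∂_w ψ − i c B ψ`. -/
lemma csh_dcov {ψ : Spt → ℂ} {B : Spt → ℝ} (c : ℝ) (w : Spt)
    (hψ : ContDiff ℝ 2 ψ) (hB : ContDiff ℝ 1 B) :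
    Differentiable ℝ (fun q => fderiv ℝ ψ q w - Complex.I * (c:ℂ) * ((B q : ℝ):ℂ) * ψ q) := by
  have hB' : Differentiable ℝ (fun q => ((B q : ℝ):ℂ)) :=
    fun q => csh_dofr ((hB.differentiable (by norm_num)) q)
  exact (csh_dpsi' hψ w).sub
    ((((differentiable_const _).mul hB').mul (hψ.differentiable (by norm_num))))

/-- fderiv of a covariant derivative. -/
lemma csh_fcov {ψ : Spt → ℂ} {B : Spt → ℝ} (c : ℝ) (w : Spt)
    (hψ : ContDiff ℝ 2 ψ) (hB : ContDiff ℝ 1 B) (p v : Spt) :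
    fderiv ℝ (fun q => fderiv ℝ ψ q w - Complex.I * (c:ℂ) * ((B q : ℝ):ℂ) * ψ q) p v
      = fderiv ℝ (fun q => fderiv ℝ ψ q w) p v
        - Complex.I * (c:ℂ) * ((fderiv ℝ B p v : ℝ):ℂ) * ψ p
        - Complex.I * (c:ℂ) * ((B p : ℝ):ℂ) * fderiv ℝ ψ p v := by
  have hB' : Differentiable ℝ (fun q => ((B q : ℝ):ℂ)) :=
    fun q => csh_dofr ((hB.differentiable (by norm_num)) q)
  have hψd : Differentiable ℝ ψ := hψ.differentiable (by norm_num)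
  have hc : DifferentiableAt ℝ (fun q => Complex.I * (c:ℂ) * ((B q : ℝ):ℂ)) p :=
    (differentiableAt_const _).mul (hB' p)
  have h2 : DifferentiableAt ℝ (fun q => Complex.I * (c:ℂ) * ((B q : ℝ):ℂ) * ψ q) p :=
    hc.mul (hψd p)
  rw [fderiv_fun_sub ((csh_dpsi' hψ w) p) h2]
  have h3 : fderiv ℝ (fun q => Complex.I * (c:ℂ) * ((B q : ℝ):ℂ) * ψ q) p v
      = (Complex.I * (c:ℂ) * ((B p : ℝ):ℂ)) * fderiv ℝ ψ p v
        + fderiv ℝ (fun q => Complex.I * (c:ℂ) * ((B q : ℝ):ℂ)) p v * ψ p :=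
    csh_fmul hc (hψd p) v
  have h4 : fderiv ℝ (fun q => Complex.I * (c:ℂ) * ((B q : ℝ):ℂ)) p v
      = Complex.I * (c:ℂ) * ((fderiv ℝ B p v : ℝ):ℂ) := by
    rw [fderiv_const_mul (csh_dofr ((hB.differentiable (by norm_num)) p))]
    simp [csh_fofr ((hB.differentiable (by norm_num)) p) v]
  simp only [ContinuousLinearMap.sub_apply, h3, h4]
  ring

/-- Differentiability of the flux density `Im(conj ψ · (∂_w ψ − i c B ψ))`. -/
lemma csh_dflux {ψ : Spt → ℂ} {B : Spt → ℝ} (c : ℝ) (w : Spt)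
    (hψ : ContDiff ℝ 2 ψ) (hB : ContDiff ℝ 1 B) (p : Spt) :
    DifferentiableAt ℝ
      (fun q => ((starRingEnd ℂ) (ψ q)
        * (fderiv ℝ ψ q w - Complex.I * (c:ℂ) * ((B q : ℝ):ℂ) * ψ q)).im) p :=
  csh_dim ((csh_dconj ((hψ.differentiable (by norm_num)) p)).mul (csh_dcov c w hψ hB p))

/-- Derivative of the flux density in direction `w`. -/
lemma csh_fflux {ψ : Spt → ℂ} {B : Spt → ℝ} (c : ℝ) (w : Spt)
    (hψ : ContDiff ℝ 2 ψ) (hB : ContDiff ℝ 1 B) (p : Spt) :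
    fderiv ℝ (fun q => ((starRingEnd ℂ) (ψ q)
        * (fderiv ℝ ψ q w - Complex.I * (c:ℂ) * ((B q : ℝ):ℂ) * ψ q)).im) p w
      = ((starRingEnd ℂ) (ψ p) * (fderiv ℝ (fun q => fderiv ℝ ψ q w) p w
          - Complex.I * (c:ℂ) * ((fderiv ℝ B p w : ℝ):ℂ) * ψ p
          - Complex.I * (c:ℂ) * ((B p : ℝ):ℂ) * fderiv ℝ ψ p w)).im
        + ((starRingEnd ℂ) (fderiv ℝ ψ p w)
          * (fderiv ℝ ψ p w - Complex.I * (c:ℂ) * ((B p : ℝ):ℂ) * ψ p)).im := by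
  have hψd : Differentiable ℝ ψ := hψ.differentiable (by norm_num)
  have hcov := csh_dcov c w hψ hB
  rw [csh_fim ((csh_dconj (hψd p)).fun_mul (hcov p)) w,
      csh_fmul (csh_dconj (hψd p)) (hcov p) w,
      csh_fconj (hψd p) w, csh_fcov c w hψ hB p w]
  simp

lemma csh_normSq_eq (ψ : Spt → ℂ) :
    (fun q => Complex.normSq (ψ q)) = fun q => ((starRingEnd ℂ) (ψ q) * ψ q).re :=
  funext fun q => by rw [← Complex.normSq_eq_conj_mul_self, Complex.ofReal_re]

lemma csh_dnormSq {ψ : Spt → ℂ} {p : Spt} (hψ : DifferentiableAt ℝ ψ p) :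
    DifferentiableAt ℝ (fun q => Complex.normSq (ψ q)) p := by
  rw [csh_normSq_eq ψ]
  exact csh_dre ((csh_dconj hψ).mul hψ)

lemma csh_fnormSq {ψ : Spt → ℂ} {p : Spt} (hψ : DifferentiableAt ℝ ψ p) (v : Spt) :
    fderiv ℝ (fun q => Complex.normSq (ψ q)) p v
      = ((starRingEnd ℂ) (ψ p) * fderiv ℝ ψ p v).re
        + ((starRingEnd ℂ) (fderiv ℝ ψ p v) * ψ p).re := by
  rw [csh_normSq_eq ψ, csh_fre ((csh_dconj hψ).fun_mul hψ) v,
      csh_fmul (csh_dconj hψ) hψ v, csh_fconj hψ v]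
  simp

/-- Mass conservation law for the scaled Chern–Simons–Higgs system:
`∂_t(ρ − ρ_R) + ∇·J = 0` with `ρ = |ψ|²`, `ρ_R = ε^{1+2δ} Im(conj ψ · D_t ψ)`,
`J = ε Im(conj ψ · Dψ)`. -/
theorem csh_mass_conservation (ε δ γ : ℝ) (hε : 0 < ε) (hδ : 0 < δ) (hγ : 1 < γ)
    (ψ : Spt → ℂ) (A₀ A₁ A₂ : Spt → ℝ)
    (hψ : ContDiff ℝ 2 ψ) (hA₀ : ContDiff ℝ 1 A₀)
    (hA₁ : ContDiff ℝ 1 A₁) (hA₂ : ContDiff ℝ 1 A₂)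
    (hE1 : ∀ p : Spt,
      Complex.I * (ε : ℂ) * Dt ε A₀ ψ p
        - ((ε ^ (2 + 2 * δ) / 2 : ℝ) : ℂ) * Dt ε A₀ (Dt ε A₀ ψ) p
        + ((ε ^ 2 / 2 : ℝ) : ℂ) *
            (D1 ε δ A₁ (D1 ε δ A₁ ψ) p + D2 ε δ A₂ (D2 ε δ A₂ ψ) p)
        - ((γ / (γ - 1) * Complex.normSq (ψ p) ^ (γ - 1) : ℝ) : ℂ) * ψ p = 0) :
    ∀ p : Spt,
      ptd (fun q => Complex.normSq (ψ q)
            - ε ^ (1 + 2 * δ) * ((starRingEnd ℂ) (ψ q) * Dt ε A₀ ψ q).im) p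
        + px1 (fun q => ε * ((starRingEnd ℂ) (ψ q) * D1 ε δ A₁ ψ q).im) p
        + px2 (fun q => ε * ((starRingEnd ℂ) (ψ q) * D2 ε δ A₂ ψ q).im) p = 0 := by
  intro p
  have hψd : Differentiable ℝ ψ := hψ.differentiable (by norm_num)
  have hE := hE1 p
  have eDt : Dt ε A₀ ψ
      = fun q => fderiv ℝ ψ q (1,0,0) - Complex.I * ((ε⁻¹:ℝ):ℂ) * ((A₀ q : ℝ):ℂ) * ψ q :=
    funext fun q => by simp only [Dt, ptd]
  have eD1 : D1 ε δ A₁ ψ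
      = fun q => fderiv ℝ ψ q (0,1,0) - Complex.I * ((ε^(δ-1):ℝ):ℂ) * ((A₁ q : ℝ):ℂ) * ψ q :=
    funext fun q => by simp only [D1, px1]
  have eD2 : D2 ε δ A₂ ψ
      = fun q => fderiv ℝ ψ q (0,0,1) - Complex.I * ((ε^(δ-1):ℝ):ℂ) * ((A₂ q : ℝ):ℂ) * ψ q :=
    funext fun q => by simp only [D2, px2]
  simp only [Dt, D1, D2, ptd, px1, px2, eDt, eD1, eD2] at hE ⊢
  rw [csh_fcov ε⁻¹ (1,0,0) hψ hA₀ p (1,0,0),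
      csh_fcov (ε ^ (δ-1)) (0,1,0) hψ hA₁ p (0,1,0),
      csh_fcov (ε ^ (δ-1)) (0,0,1) hψ hA₂ p (0,0,1)] at hE
  rw [csh_fsub (csh_dnormSq (hψd p))
        ((csh_dflux ε⁻¹ (1,0,0) hψ hA₀ p).const_mul _) (1,0,0),
      csh_fcmul _ (csh_dflux ε⁻¹ (1,0,0) hψ hA₀ p) (1,0,0),
      csh_fcmul _ (csh_dflux (ε ^ (δ-1)) (0,1,0) hψ hA₁ p) (0,1,0),
      csh_fcmul _ (csh_dflux (ε ^ (δ-1)) (0,0,1) hψ hA₂ p) (0,0,1),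
      csh_fnormSq (hψd p) (1,0,0),
      csh_fflux ε⁻¹ (1,0,0) hψ hA₀ p,
      csh_fflux (ε ^ (δ-1)) (0,1,0) hψ hA₁ p,
      csh_fflux (ε ^ (δ-1)) (0,0,1) hψ hA₂ p]
  have hpow : ε ^ (2 + 2*δ) = ε * ε ^ (1 + 2*δ) := by
    rw [show (2 + 2*δ) = 1 + (1 + 2*δ) by ring, Real.rpow_add hε, Real.rpow_one]
  rw [hpow] at hE
  have him := congrArg (fun z => ((starRingEnd ℂ) (ψ p) * z).im) hE
  simp only [mul_zero, Complex.zero_im] at him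
  have h2 : (ε/2) ≠ 0 := by positivity
  refine (mul_eq_zero.mp ?_).resolve_left h2
  refine Eq.trans ?_ him
  simp only [Complex.mul_im, Complex.mul_re, Complex.add_im, Complex.add_re,
    Complex.sub_im, Complex.sub_re, Complex.I_re, Complex.I_im,
    Complex.ofReal_re, Complex.ofReal_im, Complex.conj_re, Complex.conj_im]
  ring

end
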